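/- With G as above and K_δ(x,y; x_s,y_v) = Σ_{j=0}^{n−1} a_j p_j(x) p_j(x_s) Σ_{k=0}^{n−j+δ} c_k q_k(y) q_k(y_v) and J(x,y; x_s,y_v) = a_0 p_n(x) p_n(x_s) [Σ_{k=0}^{σ−δ−1} c_k q_k(y) q_k(y_v) + Σ_{k=0}^{δ} c_k q_k(y) q_k(y_v)] for 0 ≤ δ ≤ σ−1, the following identity holds at any pair of same-parity nodes (x_r,y_u), (x_s,y_v) ∈ S_τ: (y_u − y_v) · [K_δ(x_r,y_u; x_s,y_v) + K_{σ−δ−1}(x_r,y_u; x_s,y_v) + J(x_r,y_u; x_s,y_v)] = 0. -/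
import Mathlib


open Polynomial Finset

/-- `K_δ(x,y;x_s,y_v)` of the paper, as a real-valued function. -/
noncomputable def Kfun (n δ : ℕ) (a c : ℕ → ℝ) (p q : ℕ → Polynomial ℝ)
    (xs yv X Y : ℝ) : ℝ :=
  ∑ j ∈ Finset.range n, a j * (p j).eval X * (p j).eval xs *
    ∑ k ∈ Finset.range (n - j + δ + 1), c k * (q k).eval Y * (q k).eval yv

/-- `J(x,y;x_s,y_v)` of the paper (depending on `δ`), as a real-valued function. -/
noncomputable def Jfun (n σ δ : ℕ) (a c : ℕ → ℝ) (p q : ℕ → Polynomial ℝ)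
    (xs yv X Y : ℝ) : ℝ :=
  a 0 * (p n).eval X * (p n).eval xs *
    ((∑ k ∈ Finset.range (σ - δ), c k * (q k).eval Y * (q k).eval yv) +
     (∑ k ∈ Finset.range (δ + 1), c k * (q k).eval Y * (q k).eval yv))

theorem y_telescoping_identity (n σ τ δ : ℕ) (hτ : τ ≤ 1) (hσ : 1 ≤ σ)
    (hδ : δ ≤ σ - 1)
    (x y : ℕ → ℝ)
    (hx : ∀ j, j < n → x (j+1) < x j)
    (hy : ∀ j, j < n + σ → y (j+1) < y j)
    (a b c d : ℕ → ℝ) (p q : ℕ → Polynomial ℝ)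
    (hp0 : p 0 = 1) (hp1 : p 1 = C (a 0) * X + C (b 0))
    (hprec : ∀ k, 1 ≤ k → k ≤ n - 1 →
      p (k+1) + p (k-1) = (C (a k) * X + C (b k)) * p k)
    (hq0 : q 0 = 1) (hq1 : q 1 = C (c 0) * X + C (d 0))
    (hqrec : ∀ k, 1 ≤ k → k ≤ n + σ - 1 →
      q (k+1) + q (k-1) = (C (c k) * X + C (d k)) * q k)
    (hapos : ∀ k, k ≤ n - 1 → 0 < a k)
    (hcpos : ∀ k, k ≤ n + σ - 1 → 0 < c k)
    (harefl : ∀ k, 1 ≤ k → k ≤ n - 1 → a k = a (n - k) ∧ b k = b (n - k))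
    (hcrefl : ∀ k, 1 ≤ k → k ≤ n + σ - 1 →
      c k = c (n + σ - k) ∧ d k = d (n + σ - k))
    (hxalt : ∀ j r, j ≤ n → r ≤ n →
      (p (n - j)).eval (x r) = (-1)^r * (p j).eval (x r))
    (hyalt : ∀ k u, k ≤ n + σ → u ≤ n + σ →
      (q (n + σ - k)).eval (y u) = (-1)^u * (q k).eval (y u))
    (r u s v : ℕ) (hr : r ≤ n) (hu : u ≤ n + σ) (hs : s ≤ n) (hv : v ≤ n + σ)
    (hru : (r + u) % 2 = τ) (hsv : (s + v) % 2 = τ) :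
    (y u - y v) *
      (Kfun n δ a c p q (x s) (y v) (x r) (y u) +
       Kfun n (σ - δ - 1) a c p q (x s) (y v) (x r) (y u) +
       Jfun n σ δ a c p q (x s) (y v) (x r) (y u)) = 0 := by
  set ε : ℝ := (-1:ℝ)^(u+v) with hεdef
  set F : ℕ → ℝ := fun m => (q (m+1)).eval (y u) * (q m).eval (y v)
      - (q m).eval (y u) * (q (m+1)).eval (y v) with hF
  -- Christoffel–Darboux telescoping for the q-family
  have hCD : ∀ m, m ≤ n + σ - 1 →
      (y u - y v) * ∑ k ∈ Finset.range (m+1),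
        c k * (q k).eval (y u) * (q k).eval (y v) = F m := by
    intro m
    induction m with
    | zero =>
      intro _
      simp only [hF, Finset.sum_range_one, hq0, hq1, Polynomial.eval_one,
        Polynomial.eval_add, Polynomial.eval_mul, Polynomial.eval_C,
        Polynomial.eval_X, Nat.zero_add]
      ring
    | succ m ih =>
      intro hm
      rw [Finset.sum_range_succ, mul_add, ih (by omega)]
      have hrec := hqrec (m+1) (by omega) (by omega)
      have h1 := congrArg (Polynomial.eval (y u)) hrec
      have h2 := congrArg (Polynomial.eval (y v)) hrec
      simp only [Polynomial.eval_add, Polynomial.eval_mul, Polynomial.eval_C,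
        Polynomial.eval_X, Nat.add_sub_cancel] at h1 h2
      simp only [hF]
      linear_combination (q (m+1)).eval (y u) * h2 - (q (m+1)).eval (y v) * h1
  -- reflection of F
  have hFrefl : ∀ m, m ≤ n + σ - 1 → F (n + σ - 1 - m) = -ε * F m := by
    intro m hm
    have A := hyalt m u (by omega) hu
    have B := hyalt (m+1) u (by omega) hu
    have A' := hyalt m v (by omega) hv
    have B' := hyalt (m+1) v (by omega) hv
    simp only [hF]
    rw [show n + σ - 1 - m + 1 = n + σ - m from by omega,
        show n + σ - 1 - m = n + σ - (m+1) from by omega, A, B, A', B',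
        hεdef, pow_add]
    ring
  -- parities agree
  have hεrs : (-1:ℝ)^(r+s) = ε := by
    rw [hεdef]
    rcases Nat.even_or_odd (r+s) with h | h
    · have h2 : Even (u+v) := by
        rw [Nat.even_iff] at h ⊢; omega
      rw [h.neg_one_pow, h2.neg_one_pow]
    · have h2 : Odd (u+v) := by
        rw [Nat.odd_iff] at h ⊢; omega
      rw [h.neg_one_pow, h2.neg_one_pow]
  -- reflection of p-products
  have hPrefl : ∀ j, j ≤ n → (p (n-j)).eval (x r) * (p (n-j)).eval (x s)
      = ε * ((p j).eval (x r) * (p j).eval (x s)) := by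
    intro j hj
    rw [hxalt j r hj hr, hxalt j s hj hs, ← hεrs, pow_add]
    ring
  have hPn : (p n).eval (x r) * (p n).eval (x s) = ε := by
    have h0 := hPrefl 0 (Nat.zero_le n)
    simpa [hp0] using h0
  -- K sums after multiplying by (y u - y v)
  have hK : ∀ δ', δ' ≤ σ - 1 →
      (y u - y v) * Kfun n δ' a c p q (x s) (y v) (x r) (y u) =
      ∑ j ∈ Finset.range n,
        a j * (p j).eval (x r) * (p j).eval (x s) * F (n - j + δ') := by
    intro δ' hδ'
    unfold Kfun
    rw [Finset.mul_sum]
    refine Finset.sum_congr rfl fun j hj => ?_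
    have hj' : j < n := Finset.mem_range.mp hj
    have hcd := hCD (n - j + δ') (by omega)
    rw [← hcd]; ring
  -- J after multiplying by (y u - y v)
  have hJ : (y u - y v) * Jfun n σ δ a c p q (x s) (y v) (x r) (y u) =
      a 0 * ε * (F (σ - δ - 1) + F δ) := by
    unfold Jfun
    have h1 := hCD (σ - δ - 1) (by omega)
    rw [show σ - δ - 1 + 1 = σ - δ from by omega] at h1
    have h2 := hCD δ (by omega)
    rw [← h1, ← h2, ← hPn]
    ring
  rw [mul_add, mul_add, hK δ hδ, hK (σ - δ - 1) (by omega), hJ]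
  -- rewrite the second K-sum using the F-reflection
  have hS2 : ∀ j ∈ Finset.range n,
      a j * (p j).eval (x r) * (p j).eval (x s) * F (n - j + (σ - δ - 1)) =
      -(ε * (a j * (p j).eval (x r) * (p j).eval (x s) * F (j + δ))) := by
    intro j hj
    have hj' : j < n := Finset.mem_range.mp hj
    have hrefl := hFrefl (j + δ) (by omega)
    rw [show n - j + (σ - δ - 1) = n + σ - 1 - (j + δ) from by omega, hrefl]
    ring
  rw [Finset.sum_congr rfl hS2, Finset.sum_neg_distrib]
  rcases Nat.eq_zero_or_pos n with hn | hn
  · subst hn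
    simp only [Finset.range_zero, Finset.sum_empty, zero_add]
    have hε1 : ε = 1 := by
      have h := hεrs
      rw [show r = 0 from by omega, show s = 0 from by omega] at h
      simpa using h.symm
    have hfd := hFrefl δ (by omega)
    rw [show σ - δ - 1 = 0 + σ - 1 - δ from by omega, hfd, hε1]
    ring
  · -- n ≥ 1 : split off the j = 0 terms and reflect the rest
    have hsplit : ∀ f : ℕ → ℝ,
        ∑ j ∈ Finset.range n, f j = f 0 + ∑ j ∈ Finset.Ico 1 n, f j := by
      intro f
      rw [Finset.range_eq_Ico, Finset.sum_eq_sum_Ico_succ_bot hn]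
    rw [hsplit, hsplit]
    have hflip : ∀ g : ℕ → ℝ,
        ∑ j ∈ Finset.Ico 1 n, g (n - j) = ∑ j ∈ Finset.Ico 1 n, g j := by
      intro g
      refine Finset.sum_nbij' (fun j => n - j) (fun j => n - j) ?_ ?_ ?_ ?_ ?_
      · intro j hj
        simp only [Finset.mem_Ico] at hj ⊢
        omega
      · intro j hj
        simp only [Finset.mem_Ico] at hj ⊢
        omega
      · intro j hj
        simp only [Finset.mem_Ico] at hj
        show n - (n - j) = j
        omega
      · intro j hj
        simp only [Finset.mem_Ico] at hj
        show n - (n - j) = j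
        omega
      · intro j hj; rfl
    have hmid : ∑ j ∈ Finset.Ico 1 n,
        a j * (p j).eval (x r) * (p j).eval (x s) * F (n - j + δ)
        = ∑ j ∈ Finset.Ico 1 n,
            ε * (a j * (p j).eval (x r) * (p j).eval (x s) * F (j + δ)) := by
      have step1 : ∀ j ∈ Finset.Ico 1 n,
          a j * (p j).eval (x r) * (p j).eval (x s) * F (n - j + δ)
          = (fun m => ε * (a m * (p m).eval (x r) * (p m).eval (x s) * F (m + δ)))
              (n - j) := by
        intro j hj
        obtain ⟨h1, h2⟩ := Finset.mem_Ico.mp hj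
        have ha := (harefl j h1 (by omega)).1
        have hp := hPrefl (n - j) (by omega)
        rw [show n - (n - j) = j from by omega] at hp
        simp only
        rw [ha]
        linear_combination a (n-j) * F (n - j + δ) * hp
      rw [Finset.sum_congr rfl step1]
      exact hflip (fun m => ε * (a m * (p m).eval (x r) * (p m).eval (x s) * F (m + δ)))
    rw [hmid]
    simp only [hp0, Polynomial.eval_one, mul_one, Nat.sub_zero, Nat.zero_add]
    have hFn : F (n + δ) = -ε * F (σ - δ - 1) := by
      have h := hFrefl (σ - δ - 1) (by omega)
      rw [show n + σ - 1 - (σ - δ - 1) = n + δ from by omega] at h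
      exact h
    rw [hFn]
    ring
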